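/- Let Γ act by isometries on a compact metric space M with warped metrics d_t, and suppose for R > 0 that δ_Γ(R) := min over nontrivial γ with ‖γ‖ ≤ R of min over x ∈ M of d(x, γx) is positive (the action is free with displacement bounds). Fix r > 0 and t > 2r/δ_Γ(2r). Then for any x, y ∈ M with d_t(x, y) < r, there exists a unique γ ∈ Γ with ‖γ‖ ≤ r and d_M(γx, y) < r/t. -/
import Mathlib

/-- Word norm of `g` with respect to a generating set `S`. -/
noncomputable def wordNorm {G : Type*} [Group G] (S : Set G) (g : G) : ℕ :=
  sInf {n | ∃ l : List G, l.length = n ∧ (∀ x ∈ l, x ∈ S) ∧ l.prod = g}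

/-- The warped cone level-set distance
`d_t(x,y) = inf_{γ ∈ Γ} (t · d_M(x, γ·y) + ‖γ‖)`. -/
noncomputable def warpedDist {G M : Type*} [Group G] [MetricSpace M] [MulAction G M]
    (S : Set G) (t : ℝ) (x y : M) : ℝ :=
  ⨅ γ : G, (t * dist x (γ • y) + (wordNorm S γ : ℝ))

lemma wordNorm_set_nonempty {G : Type*} [Group G] {S : Set G} (hsymm : ∀ g ∈ S, g⁻¹ ∈ S)
    (hgen : Subgroup.closure S = ⊤) (g : G) :
    {n | ∃ l : List G, l.length = n ∧ (∀ x ∈ l, x ∈ S) ∧ l.prod = g}.Nonempty := by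
  have h1 : g ∈ (Subgroup.closure S).toSubmonoid := by rw [hgen]; trivial
  rw [Subgroup.closure_toSubmonoid] at h1
  obtain ⟨l, hl, hp⟩ := Submonoid.exists_list_of_mem_closure h1
  refine ⟨l.length, l, rfl, fun x hx => ?_, hp⟩
  rcases hl x hx with h | h
  · exact h
  · simpa using hsymm _ h

lemma wordNorm_spec {G : Type*} [Group G] {S : Set G} (hsymm : ∀ g ∈ S, g⁻¹ ∈ S)
    (hgen : Subgroup.closure S = ⊤) (g : G) :
    ∃ l : List G, l.length = wordNorm S g ∧ (∀ x ∈ l, x ∈ S) ∧ l.prod = g :=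
  Nat.sInf_mem (wordNorm_set_nonempty hsymm hgen g)

lemma wordNorm_le {G : Type*} [Group G] {S : Set G} {g : G} (l : List G)
    (hl : ∀ x ∈ l, x ∈ S) (hp : l.prod = g) : wordNorm S g ≤ l.length :=
  Nat.sInf_le ⟨l, rfl, hl, hp⟩

lemma wordNorm_inv_le {G : Type*} [Group G] {S : Set G} (hsymm : ∀ g ∈ S, g⁻¹ ∈ S)
    (hgen : Subgroup.closure S = ⊤) (g : G) : wordNorm S g⁻¹ ≤ wordNorm S g := by
  obtain ⟨l, hlen, hmem, hp⟩ := wordNorm_spec hsymm hgen g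
  have := wordNorm_le (g := g⁻¹) ((l.map Inv.inv).reverse)
    (by
      intro x hx
      simp only [List.mem_reverse, List.mem_map] at hx
      obtain ⟨a, ha, rfl⟩ := hx
      exact hsymm _ (hmem a ha))
    (by rw [← List.prod_inv_reverse, hp])
  simpa [hlen] using this

lemma wordNorm_mul_le {G : Type*} [Group G] {S : Set G} (hsymm : ∀ g ∈ S, g⁻¹ ∈ S)
    (hgen : Subgroup.closure S = ⊤) (a b : G) :
    wordNorm S (a * b) ≤ wordNorm S a + wordNorm S b := by
  obtain ⟨l1, hlen1, hmem1, hp1⟩ := wordNorm_spec hsymm hgen a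
  obtain ⟨l2, hlen2, hmem2, hp2⟩ := wordNorm_spec hsymm hgen b
  have := wordNorm_le (g := a * b) (l1 ++ l2)
    (by intro x hx; rcases List.mem_append.mp hx with h | h
        exacts [hmem1 x h, hmem2 x h])
    (by rw [List.prod_append, hp1, hp2])
  simpa [hlen1, hlen2] using this

/-- Let `Γ` act isometrically on a compact metric space `M` with warped metrics `d_t`,
and suppose `δ = δ_Γ(2r) > 0` is a lower displacement bound: every nontrivial `γ` of
word length at most `2r` displaces every point by at least `δ`.  Fix `r > 0` and
`t > 2r/δ`.  Then for any `x, y ∈ M` with `d_t(x, y) < r` there is a unique `γ ∈ Γ`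
with `‖γ‖ ≤ r` and `d_M(γx, y) < r/t`. -/
theorem unique_orbital_jump {G M : Type*} [Group G] [MetricSpace M] [CompactSpace M]
    [MulAction G M]
    (S : Set G) (hSfin : S.Finite) (hsymm : ∀ g ∈ S, g⁻¹ ∈ S)
    (hgen : Subgroup.closure S = ⊤)
    (hiso : ∀ γ : G, Isometry (fun x : M => γ • x))
    (r t δ : ℝ) (hr : 0 < r) (hδ : 0 < δ)
    (hdisp : ∀ γ : G, γ ≠ 1 → (wordNorm S γ : ℝ) ≤ 2 * r → ∀ x : M, δ ≤ dist x (γ • x))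
    (ht : 2 * r / δ < t) :
    ∀ x y : M, warpedDist S t x y < r →
      ∃! γ : G, (wordNorm S γ : ℝ) ≤ r ∧ dist (γ • x) y < r / t := by
  have ht0 : 0 < t := lt_trans (by positivity) ht
  have h2rt : 2 * r / t < δ := by
    rw [div_lt_iff₀ ht0]
    rw [div_lt_iff₀ hδ] at ht
    linarith [mul_comm t δ]
  intro x y hlt
  obtain ⟨γ, hγ⟩ : ∃ γ : G, t * dist x (γ • y) + (wordNorm S γ : ℝ) < r :=
    exists_lt_of_ciInf_lt hlt
  have hdist0 : 0 ≤ t * dist x (γ • y) := by positivity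
  have hnorm : (wordNorm S γ : ℝ) ≤ r := by linarith
  have hd : dist x (γ • y) < r / t := by
    rw [lt_div_iff₀ ht0, mul_comm]
    have : (0:ℝ) ≤ (wordNorm S γ : ℝ) := Nat.cast_nonneg _
    linarith
  -- distance identity: dist (γ⁻¹ • x) y = dist x (γ • y)
  have hdist_eq : ∀ (g : G) (a b : M), dist (g • a) (g • b) = dist a b := fun g a b =>
    (hiso g).dist_eq a b
  refine ⟨γ⁻¹, ⟨?_, ?_⟩, ?_⟩
  · calc ((wordNorm S γ⁻¹ : ℕ) : ℝ) ≤ (wordNorm S γ : ℝ) := by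
          exact_mod_cast wordNorm_inv_le hsymm hgen γ
      _ ≤ r := hnorm
  · have : dist (γ⁻¹ • x) y = dist x (γ • y) := by
      rw [← hdist_eq γ (γ⁻¹ • x) y]
      simp [smul_smul, dist_comm]
    rw [this]; exact hd
  · -- uniqueness
    intro η ⟨hηn, hηd⟩
    have hall : ∀ g₁ g₂ : G, (wordNorm S g₁ : ℝ) ≤ r → dist (g₁ • x) y < r / t →
        (wordNorm S g₂ : ℝ) ≤ r → dist (g₂ • x) y < r / t → g₁ = g₂ := by
      intro g₁ g₂ h1n h1d h2n h2d
      by_contra hne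
      have hnz : g₁⁻¹ * g₂ ≠ 1 := by
        intro h
        exact hne (inv_mul_eq_one.mp h)
      have hnorm12 : (wordNorm S (g₁⁻¹ * g₂) : ℝ) ≤ 2 * r := by
        have h1 : wordNorm S (g₁⁻¹ * g₂) ≤ wordNorm S g₁⁻¹ + wordNorm S g₂ :=
          wordNorm_mul_le hsymm hgen _ _
        have h2 : wordNorm S g₁⁻¹ ≤ wordNorm S g₁ := wordNorm_inv_le hsymm hgen g₁
        have : ((wordNorm S (g₁⁻¹ * g₂) : ℕ) : ℝ) ≤ (wordNorm S g₁ : ℝ) + (wordNorm S g₂ : ℝ) := by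
          exact_mod_cast le_trans h1 (Nat.add_le_add_right h2 _)
        linarith
      have hdd : dist x ((g₁⁻¹ * g₂) • x) < δ := by
        have : dist x ((g₁⁻¹ * g₂) • x) = dist (g₁ • x) (g₂ • x) := by
          rw [← hdist_eq g₁ x ((g₁⁻¹ * g₂) • x)]
          simp [smul_smul]
        rw [this]
        calc dist (g₁ • x) (g₂ • x) ≤ dist (g₁ • x) y + dist y (g₂ • x) := dist_triangle _ _ _
          _ < r / t + r / t := by rw [dist_comm y]; exact add_lt_add h1d h2d
          _ = 2 * r / t := by ring
          _ < δ := h2rt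
      exact absurd (hdisp _ hnz hnorm12 x) (not_le.mpr hdd)
    exact hall η γ⁻¹ hηn hηd (by
      calc ((wordNorm S γ⁻¹ : ℕ) : ℝ) ≤ (wordNorm S γ : ℝ) := by
            exact_mod_cast wordNorm_inv_le hsymm hgen γ
        _ ≤ r := hnorm)
      (by
        have : dist (γ⁻¹ • x) y = dist x (γ • y) := by
          rw [← hdist_eq γ (γ⁻¹ • x) y]
          simp [smul_smul, dist_comm]
        rw [this]; exact hd)
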